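/- If θ is irrational and not badly approximable (i.e. inf_n n‖nθ‖ = 0), then there exists a positive non-increasing sequence ψ with ∑_{n≥1} ψ(n) = ∞ such that ∑_{k≥0} ∑_{n=q_k}^{q_{k+1}-1} min(ψ(n), ‖q_k θ‖) < ∞, where q_k are the convergent denominators of θ. -/

import Mathlib

open MeasureTheory Filter
open scoped ENNReal Classical

/-- Distance from a real number to the nearest integer. -/
noncomputable def distNearestInt (x : ℝ) : ℝ := |x - round x|

lemma dni_nonneg (x : ℝ) : 0 ≤ distNearestInt x := abs_nonneg _

lemma dni_le_int (x : ℝ) (z : ℤ) : distNearestInt x ≤ |x - z| := by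
  rcases eq_or_ne z (round x) with rfl | h
  · exact le_of_eq rfl
  · have h1 : |x - round x| ≤ 1/2 := abs_sub_round x
    have h2 : (1:ℝ) ≤ |(z:ℝ) - (round x : ℝ)| := by
      have hz : z - round x ≠ 0 := sub_ne_zero.2 h
      have := Int.one_le_abs hz
      calc (1:ℝ) = ((1:ℤ):ℝ) := by norm_num
        _ ≤ ((|z - round x| : ℤ) : ℝ) := by exact_mod_cast this
        _ = |(z:ℝ) - (round x : ℝ)| := by push_cast; ring_nf
    have h3 : |(z:ℝ) - (round x:ℝ)| ≤ |(z:ℝ) - x| + |x - (round x:ℝ)| := by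
      have := abs_sub_le ((z:ℝ)) x ((round x : ℝ)); linarith [this]
    have : (1:ℝ)/2 ≤ |(z:ℝ) - x| := by linarith
    rw [abs_sub_comm] at this
    unfold distNearestInt
    linarith

lemma dni_pos {x : ℝ} (hx : Irrational x) : 0 < distNearestInt x :=
  abs_pos.2 (sub_ne_zero.2 (hx.ne_int _))

lemma round_eq_of_abs_lt {x : ℝ} {z : ℤ} (h : |x - z| < 1/2) : round x = z := by
  rw [abs_sub_lt_iff] at h
  rw [round_eq]
  refine Int.floor_eq_iff.2 ⟨by linarith [h.2], by push_cast; linarith [h.1]⟩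

section CF

variable (θ : ℝ)

lemma cfNotTerm (hθ : Irrational θ) (n : ℕ) : ¬(GenContFract.of θ).TerminatedAt n := by
  intro h
  obtain ⟨r, hr⟩ := (GenContFract.terminates_iff_rat θ).1 ⟨n, h⟩
  exact hθ ⟨r, hr.symm⟩

variable (q : ℕ → ℕ) (hq : ∀ k, (q k : ℝ) = (GenContFract.of θ).dens k)

include hq

lemma q_zero : q 0 = 1 := by
  have := hq 0
  rw [GenContFract.zeroth_den_eq_one] at this
  exact_mod_cast this

lemma q_mono : Monotone q := by
  apply monotone_nat_of_le_succ
  intro n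
  have h := GenContFract.of_den_mono (v := θ) (n := n)
  rw [← hq, ← hq] at h
  exact_mod_cast h

lemma q_rec (hθ : Irrational θ) (n : ℕ) : q n + q (n+1) ≤ q (n+2) := by
  obtain ⟨gp, hgp⟩ : ∃ gp, (GenContFract.of θ).s.get? (n+1) = some gp :=
    Option.ne_none_iff_exists'.1 (cfNotTerm θ hθ (n+1))
  have ha : gp.a = 1 := GenContFract.of_partNum_eq_one (GenContFract.partNum_eq_s_a hgp)
  have hb : 1 ≤ gp.b := GenContFract.of_one_le_get?_partDen (GenContFract.partDen_eq_s_b hgp)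
  have hrec := GenContFract.dens_recurrence hgp rfl rfl
  have h1 : (GenContFract.of θ).dens (n+1) ≤ gp.b * (GenContFract.of θ).dens (n+1) :=
    le_mul_of_one_le_left (GenContFract.zero_le_of_den) hb
  have : ((q n : ℝ)) + q (n+1) ≤ q (n+2) := by
    rw [hq, hq, hq, hrec, ha]
    linarith
  exact_mod_cast this

lemma q_pos (n : ℕ) : 1 ≤ q n := by
  induction n with
  | zero => simp [q_zero θ q hq]
  | succ n ih => exact le_trans ih (q_mono θ q hq (Nat.le_succ n))

lemma q_ge (hθ : Irrational θ) (n : ℕ) : n ≤ q (n+1) := by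
  induction n with
  | zero => exact Nat.zero_le _
  | succ n ih =>
    show n + 1 ≤ q (n + 2)
    have := q_rec θ q hq hθ n
    have h1 := q_pos θ q hq n
    omega

lemma q_lt (hθ : Irrational θ) (n : ℕ) : n < q (n+2) := by
  have h1 := q_ge θ q hq hθ n
  have h2 := q_rec θ q hq hθ n
  have h3 := q_pos θ q hq n
  omega

end CF

section CF2
variable (θ : ℝ)

lemma exists_p (hθ : Irrational θ) :
    ∃ p : ℕ → ℤ, ∀ k, ((p k : ℤ) : ℝ) = (GenContFract.of θ).nums k := by
  have key : ∀ k, (∃ z : ℤ, (GenContFract.of θ).nums k = (z : ℝ)) ∧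
      (∃ z : ℤ, (GenContFract.of θ).nums (k+1) = (z : ℝ)) := by
    intro k
    induction k with
    | zero =>
      constructor
      · exact ⟨⌊θ⌋, by rw [GenContFract.zeroth_num_eq_h, GenContFract.of_h_eq_floor]⟩
      · obtain ⟨gp, hgp⟩ : ∃ gp, (GenContFract.of θ).s.get? 0 = some gp :=
          Option.ne_none_iff_exists'.1 (cfNotTerm θ hθ 0)
        have ha : gp.a = 1 := GenContFract.of_partNum_eq_one (GenContFract.partNum_eq_s_a hgp)
        obtain ⟨z, hz⟩ := GenContFract.exists_int_eq_of_partDen (GenContFract.partDen_eq_s_b hgp)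
        refine ⟨z * ⌊θ⌋ + 1, ?_⟩
        rw [GenContFract.first_num_eq hgp, ha, GenContFract.of_h_eq_floor, hz]
        push_cast
        ring
    | succ k ih =>
      refine ⟨ih.2, ?_⟩
      obtain ⟨z1, hz1⟩ := ih.1
      obtain ⟨z2, hz2⟩ := ih.2
      obtain ⟨gp, hgp⟩ : ∃ gp, (GenContFract.of θ).s.get? (k+1) = some gp :=
        Option.ne_none_iff_exists'.1 (cfNotTerm θ hθ (k+1))
      have ha : gp.a = 1 := GenContFract.of_partNum_eq_one (GenContFract.partNum_eq_s_a hgp)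
      obtain ⟨z, hz⟩ := GenContFract.exists_int_eq_of_partDen (GenContFract.partDen_eq_s_b hgp)
      refine ⟨z * z2 + z1, ?_⟩
      rw [GenContFract.nums_recurrence hgp hz1 hz2, ha, hz]
      push_cast
      ring
  exact ⟨fun k => (key k).1.choose, fun k => ((key k).1.choose_spec).symm⟩

lemma det_real (hθ : Irrational θ) (k : ℕ) :
    (GenContFract.of θ).nums k * (GenContFract.of θ).dens (k+1) -
      (GenContFract.of θ).dens k * (GenContFract.of θ).nums (k+1) = (-1 : ℝ) ^ (k+1) := by
  let s : SimpContFract ℝ := ⟨GenContFract.of θ, GenContFract.of_isSimpContFract θ⟩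
  have h := SimpContFract.determinant (s := s) (n := k) (cfNotTerm θ hθ k)
  exact h

variable (q : ℕ → ℕ) (hq : ∀ k, (q k : ℝ) = (GenContFract.of θ).dens k)
  (p : ℕ → ℤ) (hp : ∀ k, ((p k : ℤ) : ℝ) = (GenContFract.of θ).nums k)

include hq hp

lemma det_int (hθ : Irrational θ) (k : ℕ) :
    p k * q (k+1) - q k * p (k+1) = (-1 : ℤ) ^ (k+1) := by
  have h := det_real θ hθ k
  rw [← hq, ← hq, ← hp, ← hp] at h
  exact_mod_cast h

lemma approx (hθ : Irrational θ) (k : ℕ) :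
    |(q k : ℝ) * θ - p k| ≤ 1 / (q (k+1) : ℝ) := by
  have h := GenContFract.abs_sub_convs_le (cfNotTerm θ hθ k)
  rw [GenContFract.conv_eq_num_div_den, ← hq, ← hq, ← hp] at h
  have hq0 : (0:ℝ) < q k := by exact_mod_cast q_pos θ q hq k
  have hq1 : (0:ℝ) < q (k+1) := by exact_mod_cast q_pos θ q hq (k+1)
  have h2 : |(q k : ℝ)| * |θ - (p k : ℝ) / (q k : ℝ)| ≤ (q k : ℝ) * (1 / ((q k : ℝ) * (q (k+1) : ℝ))) := by
    rw [abs_of_pos hq0]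
    exact mul_le_mul_of_nonneg_left h (le_of_lt hq0)
  rw [← abs_mul] at h2
  have h3 : (q k : ℝ) * (θ - (p k : ℝ) / (q k : ℝ)) = (q k : ℝ) * θ - p k := by
    field_simp
  rw [h3] at h2
  have h4 : (q k : ℝ) * (1 / ((q k : ℝ) * (q (k+1) : ℝ))) = 1 / (q (k+1) : ℝ) := by
    field_simp
  rwa [h4] at h2

end CF2
section CF3
variable (θ : ℝ) (q : ℕ → ℕ) (hq : ∀ k, (q k : ℝ) = (GenContFract.of θ).dens k)
  (p : ℕ → ℤ) (hp : ∀ k, ((p k : ℤ) : ℝ) = (GenContFract.of θ).nums k)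

include hq hp

lemma eps_le (hθ : Irrational θ) (k : ℕ) :
    distNearestInt ((q k : ℝ) * θ) ≤ 1 / (q (k+1) : ℝ) :=
  le_trans (dni_le_int _ (p k)) (approx θ q hq p hp hθ k)

omit hp

lemma qθ_irr (hθ : Irrational θ) (k : ℕ) : Irrational ((q k : ℝ) * θ) := by
  have h1 : q k ≠ 0 := by have := q_pos θ q hq k; omega
  exact hθ.natCast_mul h1

lemma eps_pos (hθ : Irrational θ) (k : ℕ) : 0 < distNearestInt ((q k : ℝ) * θ) :=
  dni_pos (qθ_irr θ q hq hθ k)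

lemma two_le_q (hθ : Irrational θ) (k : ℕ) : 2 ≤ q (k + 2) := by
  have h1 := q_rec θ q hq hθ k
  have h2 := q_pos θ q hq k
  have h3 := q_pos θ q hq (k+1)
  omega

include hp

lemma abs_lt_half (hθ : Irrational θ) (k : ℕ) (hk : 1 ≤ k) :
    |(q k : ℝ) * θ - p k| < 1/2 := by
  have h1 := approx θ q hq p hp hθ k
  have h2 : 2 ≤ q (k+1) := by
    obtain ⟨k', rfl⟩ := Nat.exists_eq_add_of_le hk
    have := two_le_q θ q hq hθ k'
    have := q_mono θ q hq (show k' + 2 ≤ 1 + k' + 1 by omega)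
    omega
  have h2' : (2:ℝ) ≤ (q (k+1) : ℝ) := by exact_mod_cast h2
  have h3 : 1 / (q (k+1) : ℝ) ≤ 1/2 := by
    apply div_le_div_of_nonneg_left <;> linarith
  have h4 : |(q k : ℝ) * θ - p k| ≠ 1/2 := by
    intro habs
    have hirr : Irrational ((q k : ℝ) * θ - p k) := (qθ_irr θ q hq hθ k).sub_intCast _
    rcases abs_eq (by norm_num : (0:ℝ) ≤ 1/2) |>.1 habs with h | h
    · exact (hirr.ne_rat (1/2)) (by rw [h]; norm_num)
    · exact (hirr.ne_rat (-(1/2))) (by rw [h]; norm_num)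
  cases lt_or_eq_of_le (le_trans h1 h3) with
  | inl h => exact h
  | inr h => exact absurd h h4

lemma round_qθ (hθ : Irrational θ) (k : ℕ) (hk : 1 ≤ k) :
    round ((q k : ℝ) * θ) = p k :=
  round_eq_of_abs_lt (abs_lt_half θ q hq p hp hθ k hk)

lemma eps_lower (hθ : Irrational θ) (k : ℕ) (hk : 1 ≤ k) :
    1 / (2 * (q (k+1) : ℝ)) ≤ distNearestInt ((q k : ℝ) * θ) := by
  have heps : distNearestInt ((q k : ℝ) * θ) = |(q k : ℝ) * θ - p k| := by
    unfold distNearestInt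
    rw [round_qθ θ q hq p hp hθ k hk]
  -- determinant bound
  have hdet := det_real θ hθ k
  rw [← hq, ← hq, ← hp, ← hp] at hdet
  have h1 : (1:ℝ) = |(p k : ℝ) * (q (k+1) : ℝ) - (q k : ℝ) * (p (k+1) : ℝ)| := by
    rw [hdet, abs_pow, abs_neg, abs_one, one_pow]
  have hiden : (p k : ℝ) * (q (k+1) : ℝ) - (q k : ℝ) * (p (k+1) : ℝ) =
      (q (k+1) : ℝ) * ((p k : ℝ) - (q k : ℝ) * θ) + (q k : ℝ) * ((q (k+1) : ℝ) * θ - p (k+1)) := by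
    ring
  have hq1 : (0:ℝ) ≤ (q (k+1) : ℝ) := by positivity
  have hqk : (0:ℝ) ≤ (q k : ℝ) := by positivity
  have h2 : (1:ℝ) ≤ (q (k+1) : ℝ) * |(q k : ℝ) * θ - p k| + (q k : ℝ) * |(q (k+1) : ℝ) * θ - p (k+1)| := by
    rw [h1, hiden]
    calc |(q (k+1) : ℝ) * ((p k : ℝ) - (q k : ℝ) * θ) + (q k : ℝ) * ((q (k+1) : ℝ) * θ - p (k+1))|
        ≤ |(q (k+1) : ℝ) * ((p k : ℝ) - (q k : ℝ) * θ)| + |(q k : ℝ) * ((q (k+1) : ℝ) * θ - p (k+1))| :=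
          abs_add_le _ _
      _ = (q (k+1) : ℝ) * |(q k : ℝ) * θ - p k| + (q k : ℝ) * |(q (k+1) : ℝ) * θ - p (k+1)| := by
          rw [abs_mul, abs_mul, abs_of_nonneg hq1, abs_of_nonneg hqk, abs_sub_comm]
  -- second term ≤ 1/2
  have h3 : |(q (k+1) : ℝ) * θ - p (k+1)| ≤ 1 / (q (k+2) : ℝ) := approx θ q hq p hp hθ (k+1)
  have h4 : 2 * q k ≤ q (k+2) := by
    have := q_rec θ q hq hθ k
    have := q_mono θ q hq (show k ≤ k + 1 by omega)
    omega
  have hq2pos : (0:ℝ) < (q (k+2) : ℝ) := by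
    have := q_pos θ q hq (k+2); exact_mod_cast Nat.lt_of_lt_of_le Nat.zero_lt_one this
  have h5 : (q k : ℝ) * |(q (k+1) : ℝ) * θ - p (k+1)| ≤ 1/2 := by
    have h4' : 2 * (q k : ℝ) ≤ (q (k+2) : ℝ) := by exact_mod_cast h4
    have := mul_le_mul_of_nonneg_left h3 hqk
    have h6 : (q k : ℝ) * (1 / (q (k+2) : ℝ)) ≤ 1/2 := by
      rw [mul_one_div, div_le_div_iff₀ hq2pos (by norm_num)]
      linarith
    linarith
  have h7 : 1/2 ≤ (q (k+1) : ℝ) * |(q k : ℝ) * θ - p k| := by linarith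
  rw [heps]
  have hq1pos : (0:ℝ) < (q (k+1) : ℝ) := by
    have := q_pos θ q hq (k+1); exact_mod_cast Nat.lt_of_lt_of_le Nat.zero_lt_one this
  rw [div_le_iff₀ (by linarith)]
  calc (1:ℝ) = 2 * (1/2) := by norm_num
    _ ≤ 2 * ((q (k+1) : ℝ) * |(q k : ℝ) * θ - p k|) := by linarith
    _ = |(q k : ℝ) * θ - p k| * (2 * (q (k+1) : ℝ)) := by ring

end CF3
section CF4
variable (θ : ℝ) (q : ℕ → ℕ) (hq : ∀ k, (q k : ℝ) = (GenContFract.of θ).dens k)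
  (p : ℕ → ℤ) (hp : ∀ k, ((p k : ℤ) : ℝ) = (GenContFract.of θ).nums k)

include hq hp

lemma lower_all (hθ : Irrational θ) (n k : ℕ) (hn : 1 ≤ n) (hnk : n < q (k+1)) :
    1 / (2 * (q (k+2) : ℝ)) ≤ distNearestInt ((n : ℝ) * θ) := by
  set m : ℤ := round ((n : ℝ) * θ) with hm
  by_cases hD : (n : ℤ) * p (k+2) - m * q (k+2) = 0
  · exfalso
    have hdet : p (k+2) * q (k+3) - q (k+2) * p (k+3) = (-1 : ℤ) ^ (k+3) :=
      det_int θ q hq p hp hθ (k+2)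
    have key : (q (k+2) : ℤ) * ((n : ℤ) * p (k+3) - m * q (k+3)) =
        (n : ℤ) * ((q (k+2) : ℤ) * p (k+3) - p (k+2) * q (k+3)) := by
      linear_combination (q (k+3) : ℤ) * hD
    have key2 : (q (k+2) : ℤ) * ((n : ℤ) * p (k+3) - m * q (k+3)) =
        (n : ℤ) * (-(-1 : ℤ) ^ (k+3)) := by
      rw [key]; linear_combination (-(n:ℤ)) * hdet
    have hdvd : (q (k+2) : ℤ) ∣ (n : ℤ) := by
      refine ⟨((n : ℤ) * p (k+3) - m * q (k+3)) * (-(-1 : ℤ) ^ (k+3)), ?_⟩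
      have hsq : (-(-1 : ℤ) ^ (k+3)) * (-(-1 : ℤ) ^ (k+3)) = 1 := by
        rcases Nat.even_or_odd (k+3) with h | h
        · rw [Even.neg_one_pow h]; norm_num
        · rw [Odd.neg_one_pow h]; norm_num
      calc (n : ℤ) = (n : ℤ) * ((-(-1 : ℤ) ^ (k+3)) * (-(-1 : ℤ) ^ (k+3))) := by rw [hsq]; ring
        _ = ((n : ℤ) * (-(-1 : ℤ) ^ (k+3))) * (-(-1 : ℤ) ^ (k+3)) := by ring
        _ = ((q (k+2) : ℤ) * ((n : ℤ) * p (k+3) - m * q (k+3))) * (-(-1 : ℤ) ^ (k+3)) := by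
            rw [key2]
        _ = (q (k+2) : ℤ) * (((n : ℤ) * p (k+3) - m * q (k+3)) * (-(-1 : ℤ) ^ (k+3))) := by ring
    have hle : (q (k+2) : ℤ) ≤ (n : ℤ) := Int.le_of_dvd (by exact_mod_cast hn) hdvd
    have : q (k+2) ≤ n := by exact_mod_cast hle
    have hmono := q_mono θ q hq (show k + 1 ≤ k + 2 by omega)
    omega
  · have h1 : (1 : ℤ) ≤ |(n : ℤ) * p (k+2) - m * q (k+2)| := Int.one_le_abs hD
    have h1' : (1 : ℝ) ≤ |(n : ℝ) * (p (k+2) : ℝ) - (m : ℝ) * (q (k+2) : ℝ)| := by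
      exact_mod_cast h1
    have hiden : (n : ℝ) * (p (k+2) : ℝ) - (m : ℝ) * (q (k+2) : ℝ) =
        (q (k+2) : ℝ) * ((n : ℝ) * θ - m) - (n : ℝ) * ((q (k+2) : ℝ) * θ - p (k+2)) := by ring
    have hq2 : (0:ℝ) ≤ (q (k+2) : ℝ) := by positivity
    have hn0 : (0:ℝ) ≤ (n : ℝ) := by positivity
    have h2 : (1:ℝ) ≤ (q (k+2) : ℝ) * distNearestInt ((n : ℝ) * θ) +
        (n : ℝ) * |(q (k+2) : ℝ) * θ - p (k+2)| := by
      calc (1:ℝ) ≤ |(n : ℝ) * (p (k+2) : ℝ) - (m : ℝ) * (q (k+2) : ℝ)| := h1'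
        _ = |(q (k+2) : ℝ) * ((n : ℝ) * θ - m) - (n : ℝ) * ((q (k+2) : ℝ) * θ - p (k+2))| := by
            rw [hiden]
        _ ≤ |(q (k+2) : ℝ) * ((n : ℝ) * θ - m)| + |(n : ℝ) * ((q (k+2) : ℝ) * θ - p (k+2))| :=
            abs_sub _ _
        _ = (q (k+2) : ℝ) * distNearestInt ((n : ℝ) * θ) +
            (n : ℝ) * |(q (k+2) : ℝ) * θ - p (k+2)| := by
            rw [abs_mul, abs_mul, abs_of_nonneg hq2, abs_of_nonneg hn0]
            rfl
    have h3 : |(q (k+2) : ℝ) * θ - p (k+2)| ≤ 1 / (q (k+3) : ℝ) := approx θ q hq p hp hθ (k+2)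
    have h4 : 2 * n ≤ q (k+3) := by
      have hr : q (k+1) + q (k+2) ≤ q (k+3) := q_rec θ q hq hθ (k+1)
      have hmono : q (k+1) ≤ q (k+2) := q_mono θ q hq (show k + 1 ≤ k + 2 by omega)
      omega
    have hq3pos : (0:ℝ) < (q (k+3) : ℝ) := by
      have := q_pos θ q hq (k+3)
      exact_mod_cast Nat.lt_of_lt_of_le Nat.zero_lt_one this
    have h5 : (n : ℝ) * |(q (k+2) : ℝ) * θ - p (k+2)| ≤ 1/2 := by
      have h4' : 2 * (n : ℝ) ≤ (q (k+3) : ℝ) := by exact_mod_cast h4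
      have h6 := mul_le_mul_of_nonneg_left h3 hn0
      have h7 : (n : ℝ) * (1 / (q (k+3) : ℝ)) ≤ 1/2 := by
        rw [mul_one_div, div_le_div_iff₀ hq3pos (by norm_num)]
        linarith
      linarith
    have h8 : 1/2 ≤ (q (k+2) : ℝ) * distNearestInt ((n : ℝ) * θ) := by linarith
    have hq2pos : (0:ℝ) < (q (k+2) : ℝ) := by
      have := q_pos θ q hq (k+2)
      exact_mod_cast Nat.lt_of_lt_of_le Nat.zero_lt_one this
    rw [div_le_iff₀ (by linarith)]
    calc (1:ℝ) = 2 * (1/2) := by norm_num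
      _ ≤ 2 * ((q (k+2) : ℝ) * distNearestInt ((n : ℝ) * θ)) := by linarith
      _ = distNearestInt ((n : ℝ) * θ) * (2 * (q (k+2) : ℝ)) := by ring

lemma exists_good (hθ : Irrational θ)
    (hnotbad : ∀ c : ℝ, 0 < c → ∃ n : ℕ, 1 ≤ n ∧ (n : ℝ) * distNearestInt ((n : ℝ) * θ) < c)
    (c : ℝ) (hc : 0 < c) (K : ℕ) :
    ∃ k, K ≤ k ∧ (q k : ℝ) * distNearestInt ((q k : ℝ) * θ) < c := by
  by_contra hcon
  push_neg at hcon
  -- hcon : ∀ k, K ≤ k → c ≤ q k * ε k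
  have hratio : ∀ k, K ≤ k → c * (q (k+1) : ℝ) ≤ (q k : ℝ) := by
    intro k hk
    have h1 := hcon k hk
    have h2 := eps_le θ q hq p hp hθ k
    have hqpos : (0:ℝ) < (q (k+1) : ℝ) := by
      have := q_pos θ q hq (k+1)
      exact_mod_cast Nat.lt_of_lt_of_le Nat.zero_lt_one this
    have hqk : (0:ℝ) ≤ (q k : ℝ) := by positivity
    have h3 : (q k : ℝ) * distNearestInt ((q k : ℝ) * θ) ≤ (q k : ℝ) * (1 / (q (k+1) : ℝ)) :=
      mul_le_mul_of_nonneg_left h2 hqk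
    have h4 : c ≤ (q k : ℝ) / (q (k+1) : ℝ) := by
      rw [div_eq_mul_one_div]
      linarith
    calc c * (q (k+1) : ℝ) ≤ ((q k : ℝ) / (q (k+1) : ℝ)) * (q (k+1) : ℝ) :=
          mul_le_mul_of_nonneg_right h4 (le_of_lt hqpos)
      _ = (q k : ℝ) := by field_simp
  -- finite min over small n
  have hFne : (Finset.Ico 1 (q K + 1)).Nonempty := by
    refine ⟨1, ?_⟩
    rw [Finset.mem_Ico]
    have := q_pos θ q hq K
    omega
  have hGne : ((Finset.Ico 1 (q K + 1)).image
      (fun n : ℕ => (n : ℝ) * distNearestInt ((n : ℝ) * θ))).Nonempty := hFne.image _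
  have hmvpos : 0 < Finset.min' _ hGne := by
    have hmem := Finset.min'_mem _ hGne
    obtain ⟨n, hnF, hne⟩ := Finset.mem_image.1 hmem
    rw [Finset.mem_Ico] at hnF
    have hirr : Irrational ((n:ℝ) * θ) := hθ.natCast_mul (by omega)
    have hd := dni_pos hirr
    rw [← hne]
    have hn' : (0:ℝ) < (n:ℝ) := by exact_mod_cast Nat.lt_of_lt_of_le Nat.zero_lt_one hnF.1
    positivity
  have hCpos : 0 < min (c^2/2) (Finset.min' _ hGne) := lt_min (by positivity) hmvpos
  obtain ⟨n, hn1, hnlt⟩ := hnotbad _ hCpos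
  by_cases hsmall : n ≤ q K
  · have hnF : n ∈ Finset.Ico 1 (q K + 1) := by rw [Finset.mem_Ico]; omega
    have h1 : Finset.min' _ hGne ≤ (n : ℝ) * distNearestInt ((n : ℝ) * θ) := by
      apply Finset.min'_le
      exact Finset.mem_image.2 ⟨n, hnF, rfl⟩
    have h2 : min (c^2/2) (Finset.min' _ hGne) ≤ (n : ℝ) * distNearestInt ((n : ℝ) * θ) :=
      le_trans (min_le_right _ _) h1
    linarith
  · push_neg at hsmall
    have hex : ∃ j, n < q j := ⟨n + 2, q_lt θ q hq hθ n⟩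
    have hK'spec : n < q (Nat.find hex) := Nat.find_spec hex
    have hK'pos : Nat.find hex ≠ 0 := by
      intro h0
      rw [h0, q_zero θ q hq] at hK'spec
      omega
    obtain ⟨k, hk⟩ : ∃ k, Nat.find hex = k + 1 := ⟨Nat.find hex - 1, by omega⟩
    rw [hk] at hK'spec
    have hqk_le : q k ≤ n := by
      by_contra hlt
      push_neg at hlt
      exact Nat.find_min hex (by omega : k < Nat.find hex) hlt
    have hkK : K ≤ k := by
      by_contra hlt
      push_neg at hlt
      have : q (k+1) ≤ q K := q_mono θ q hq (by omega)
      omega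
    have hlow := lower_all θ q hq p hp hθ n k hn1 hK'spec
    have h1 := hratio k hkK
    have h2 := hratio (k+1) (by omega)
    have hq2pos : (0:ℝ) < (q (k+2) : ℝ) := by
      have := q_pos θ q hq (k+2)
      exact_mod_cast Nat.lt_of_lt_of_le Nat.zero_lt_one this
    have hqkn : (q k : ℝ) ≤ (n : ℝ) := by exact_mod_cast hqk_le
    have hbound : c^2/2 ≤ (n : ℝ) * distNearestInt ((n : ℝ) * θ) := by
      have hd := dni_nonneg ((n : ℝ) * θ)
      have step : (q k : ℝ) * (1 / (2 * (q (k+2) : ℝ))) ≤ (n : ℝ) * distNearestInt ((n : ℝ) * θ) := by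
        apply mul_le_mul hqkn hlow (by positivity) (by positivity)
      have hqq : c^2 * (q (k+2) : ℝ) ≤ (q k : ℝ) := by
        have h2' : c * (q (k+2) : ℝ) ≤ (q (k+1) : ℝ) := h2
        nlinarith [q_pos θ q hq (k+2), hc.le]
      have hfin : c^2/2 ≤ (q k : ℝ) * (1 / (2 * (q (k+2) : ℝ))) := by
        rw [mul_one_div, le_div_iff₀ (by linarith)]
        nlinarith
      linarith
    have : min (c^2/2) (Finset.min' _ hGne) ≤ (n : ℝ) * distNearestInt ((n : ℝ) * θ) :=
      le_trans (min_le_left _ _) hbound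
    linarith
end CF4
lemma sum_blocks (f : ℕ → ℕ) (hf : Monotone f) (g : ℕ → ℝ) (a b : ℕ) (hab : a ≤ b) :
    ∑ k ∈ Finset.Ico a b, ∑ n ∈ Finset.Ico (f k) (f (k+1)), g n
      = ∑ n ∈ Finset.Ico (f a) (f b), g n := by
  induction b, hab using Nat.le_induction with
  | base => simp
  | succ b hab ih =>
    rw [Finset.sum_Ico_succ_top hab, ih,
      Finset.sum_Ico_consecutive _ (hf hab) (hf (Nat.le_succ b))]

set_option maxHeartbeats 1600000 in
theorem not_badly_approximable_convergence
    (θ : ℝ) (hθ : Irrational θ) (q : ℕ → ℕ)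
    (hq : ∀ k, (q k : ℝ) = (GenContFract.of θ).dens k)
    (hnotbad : ∀ c : ℝ, 0 < c → ∃ n : ℕ, 1 ≤ n ∧ (n : ℝ) * distNearestInt ((n : ℝ) * θ) < c) :
    ∃ ψ : ℕ → ℝ, (∀ n, 0 < ψ n) ∧ (∀ m n, m ≤ n → ψ n ≤ ψ m) ∧
      (¬ Summable ψ) ∧
      Summable fun k =>
        ∑ n ∈ Finset.Ico (q k) (q (k + 1)), min (ψ n) (distNearestInt ((q k : ℝ) * θ)) := by
  classical
  obtain ⟨p, hp⟩ := exists_p θ hθ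
  set eps : ℕ → ℝ := fun k => distNearestInt ((q k : ℝ) * θ) with heps
  -- basic facts
  have hqpos : ∀ k, (0:ℝ) < q k := fun k => by
    have := q_pos θ q hq k
    exact_mod_cast Nat.lt_of_lt_of_le Nat.zero_lt_one this
  have hepspos : ∀ k, 0 < eps k := fun k => eps_pos θ q hq hθ k
  have hepsle : ∀ k, eps k ≤ 1 / (q (k+1) : ℝ) := fun k => eps_le θ q hq p hp hθ k
  have hepslow : ∀ k, 1 ≤ k → 1 / (2 * (q (k+1) : ℝ)) ≤ eps k :=
    fun k hk => eps_lower θ q hq p hp hθ k hk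
  have hqmono := q_mono θ q hq
  -- choose the subsequence kk
  have hg : ∀ (K j : ℕ), ∃ k, K ≤ k ∧ (q k : ℝ) * eps k < (1/16 : ℝ)^(j+4) :=
    fun K j => exists_good θ q hq p hp hθ hnotbad ((1/16 : ℝ)^(j+4)) (by positivity) K
  choose f hf1 hf2 using hg
  set kk : ℕ → ℕ := fun j => Nat.rec (f 1 0) (fun j ih => f (ih + 1) (j + 1)) j with hkk
  have hkk0 : 1 ≤ kk 0 := hf1 1 0
  have hkksucc : ∀ j, kk j + 1 ≤ kk (j+1) := fun j => hf1 (kk j + 1) (j+1)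
  have hkk1 : ∀ j, 1 ≤ kk j := by
    intro j
    induction j with
    | zero => exact hkk0
    | succ j ih => have := hkksucc j; omega
  have hkkmono : Monotone kk := monotone_nat_of_le_succ (fun j => by have := hkksucc j; omega)
  have hkkge : ∀ j, j + 1 ≤ kk j := by
    intro j
    induction j with
    | zero => exact hkk0
    | succ j ih => have := hkksucc j; omega
  have hsmall : ∀ j, (q (kk j) : ℝ) * eps (kk j) < (1/16 : ℝ)^(j+4) := by
    intro j
    cases j with
    | zero => exact hf2 1 0
    | succ j => exact hf2 (kk j + 1) (j+1)
  -- the construction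
  set T : ℕ → ℕ := fun j => ⌈(1/4 : ℝ)^(j+2) / eps (kk j)⌉₊ with hT
  set del : ℕ → ℝ := fun j => (4 : ℝ)^(j+2) * eps (kk j) with hdel
  set E : ℕ → ℕ := fun j => q (kk j) + T j with hE
  have hdelpos : ∀ j, 0 < del j := fun j =>
    mul_pos (by positivity) (hepspos (kk j))
  have hTlb : ∀ j, (1/4 : ℝ)^(j+2) / eps (kk j) ≤ (T j : ℝ) := fun j => Nat.le_ceil _
  have hTub : ∀ j, (T j : ℝ) ≤ (1/4 : ℝ)^(j+2) / eps (kk j) + 1 := fun j =>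
    le_of_lt (Nat.ceil_lt_add_one (div_nonneg (by positivity) (hepspos (kk j)).le))
  -- key: the block fits inside the convergent gap
  have htwoq : ∀ j, (2:ℝ) ≤ q (kk j + 1) := by
    intro j
    have h := two_le_q θ q hq hθ (kk j - 1)
    have he : kk j - 1 + 2 = kk j + 1 := by have := hkk1 j; omega
    rw [he] at h
    exact_mod_cast h
  have hpow4 : ∀ j, (1:ℝ) ≤ (4:ℝ)^j := fun j => one_le_pow₀ (by norm_num)
  have hpow14 : ∀ j, (1/4:ℝ)^j ≤ 1 := fun j => pow_le_one₀ (by norm_num) (by norm_num)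
  have hpow116 : ∀ j, (1/16:ℝ)^j ≤ 1 := fun j => pow_le_one₀ (by norm_num) (by norm_num)
  have hpow116pos : ∀ j, (0:ℝ) < (1/16:ℝ)^j := fun j => by positivity
  have hinv : ∀ j, 1 / eps (kk j) ≤ 2 * (q (kk j + 1) : ℝ) := by
    intro j
    have hlow := hepslow (kk j) (hkk1 j)
    have hQpos : (0:ℝ) < 2 * (q (kk j + 1) : ℝ) := by linarith [htwoq j]
    rw [div_le_iff₀ (hepspos (kk j))]
    rw [div_le_iff₀ hQpos] at hlow
    linarith
  have hqe : ∀ j, (q (kk j) : ℝ) ≤ (1/16:ℝ)^(j+4) / eps (kk j) := by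
    intro j
    rw [le_div_iff₀ (hepspos (kk j))]
    exact (hsmall j).le
  have hkey : ∀ j, E j ≤ q (kk j + 1) := by
    intro j
    have hQ2 := htwoq j
    have hTu := hTub j
    have hqej := hqe j
    have hinvj := hinv j
    have h14 : (1/4:ℝ)^(j+2) ≤ 1/16 := by
      rw [pow_add]
      nlinarith [hpow14 j]
    have h116 : (1/16:ℝ)^(j+4) ≤ 1/16 := by
      rw [pow_add]
      nlinarith [hpow116 j, hpow116pos j]
    have hepos := hepspos (kk j)
    have hTQ : (T j : ℝ) ≤ (q (kk j + 1) : ℝ)/8 + 1 := by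
      have h1 : (1/4:ℝ)^(j+2) / eps (kk j) = (1/4:ℝ)^(j+2) * (1 / eps (kk j)) := by ring
      have h2 : (1/4:ℝ)^(j+2) * (1 / eps (kk j)) ≤ (1/16) * (2 * (q (kk j + 1) : ℝ)) := by
        apply mul_le_mul h14 hinvj (by positivity) (by norm_num)
      calc (T j : ℝ) ≤ (1/4:ℝ)^(j+2) / eps (kk j) + 1 := hTu
        _ ≤ (1/16) * (2 * (q (kk j + 1) : ℝ)) + 1 := by rw [h1]; linarith
        _ = (q (kk j + 1) : ℝ)/8 + 1 := by ring
    have hQk : (q (kk j) : ℝ) ≤ (q (kk j + 1) : ℝ)/8 := by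
      have h2 : (1/16:ℝ)^(j+4) / eps (kk j) = (1/16:ℝ)^(j+4) * (1 / eps (kk j)) := by ring
      have h3 : (1/16:ℝ)^(j+4) * (1 / eps (kk j)) ≤ (1/16) * (2 * (q (kk j + 1) : ℝ)) := by
        apply mul_le_mul h116 hinvj (by positivity) (by norm_num)
      calc (q (kk j) : ℝ) ≤ (1/16:ℝ)^(j+4) / eps (kk j) := hqej
        _ ≤ (1/16) * (2 * (q (kk j + 1) : ℝ)) := by rw [h2]; linarith
        _ = (q (kk j + 1) : ℝ)/8 := by ring
    have hreal : (q (kk j) : ℝ) + (T j : ℝ) ≤ (q (kk j + 1) : ℝ) := by linarith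
    have : ((q (kk j) + T j : ℕ) : ℝ) ≤ ((q (kk j + 1) : ℕ) : ℝ) := by push_cast; linarith
    exact_mod_cast this
  have hEq : ∀ j, E j ≤ q (kk (j+1)) := fun j =>
    le_trans (hkey j) (hqmono (hkksucc j))
  have hEmono : Monotone E := monotone_nat_of_le_succ (fun j =>
    le_trans (hEq j) (Nat.le_add_right _ _))
  have hdelmono : ∀ j, del (j+1) ≤ del j := by
    intro j
    have hQn2 := htwoq j
    have hQnpos : (0:ℝ) < (q (kk j + 1) : ℝ) := by linarith
    have hQ' : (q (kk j + 1):ℝ) ≤ (q (kk (j+1)) : ℝ) := by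
      exact_mod_cast hqmono (hkksucc j)
    have hQBpos : (0:ℝ) < (q (kk (j+1)) : ℝ) := by linarith
    have hlow' := hepslow (kk j) (hkk1 j)
    have h1 : 8/((q (kk j + 1)):ℝ) ≤ del j := by
      have h16 : (16:ℝ) ≤ (4:ℝ)^(j+2) := by
        rw [pow_add]
        nlinarith [hpow4 j]
      have hmm : (16:ℝ) * (1/(2 * (q (kk j + 1) : ℝ))) ≤ (4:ℝ)^(j+2) * eps (kk j) := by
        apply mul_le_mul h16 hlow' (by positivity) (by positivity)
      have he : (16:ℝ) * (1/(2 * (q (kk j + 1) : ℝ))) = 8/((q (kk j + 1)):ℝ) := by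
        field_simp
        ring
      rw [← he]
      exact hmm
    have h2 : del (j+1) ≤ 8/((q (kk j + 1)):ℝ) := by
      have heB : eps (kk (j+1)) ≤ (1/16:ℝ)^(j+1+4) / (q (kk (j+1)) : ℝ) := by
        rw [le_div_iff₀ hQBpos]
        have := hsmall (j+1)
        nlinarith
      have hprod : (4:ℝ)^(j+1+2) * (1/16:ℝ)^(j+1+4) ≤ 8 := by
        have hab : (4:ℝ)^j * (1/16:ℝ)^j ≤ 1 := by
          rw [← mul_pow]
          apply pow_le_one₀ <;> norm_num
        have e1 : (4:ℝ)^(j+1+2) = (4:ℝ)^j * 64 := by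
          rw [show j+1+2 = j+3 from rfl, pow_add]
          norm_num
        have e2 : (1/16:ℝ)^(j+1+4) = (1/16:ℝ)^j * (1/1048576) := by
          rw [show j+1+4 = j+5 from rfl, pow_add]
          norm_num
        rw [e1, e2]
        nlinarith [hpow4 j, hpow116pos j]
      calc del (j+1) = (4:ℝ)^(j+1+2) * eps (kk (j+1)) := rfl
        _ ≤ (4:ℝ)^(j+1+2) * ((1/16:ℝ)^(j+1+4) / (q (kk (j+1)) : ℝ)) := by
            apply mul_le_mul_of_nonneg_left heB (by positivity)
        _ = ((4:ℝ)^(j+1+2) * (1/16:ℝ)^(j+1+4)) / (q (kk (j+1)) : ℝ) := by ring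
        _ ≤ 8 / (q (kk (j+1)) : ℝ) := by gcongr
        _ ≤ 8/((q (kk j + 1)):ℝ) := by gcongr <;> norm_num
    linarith
  have hdelanti : Antitone del := antitone_nat_of_succ_le hdelmono
  have hEx : ∀ n, ∃ j, n < E j := by
    intro n
    refine ⟨n+1, ?_⟩
    have h1 : n < q (n+2) := q_lt θ q hq hθ n
    have h2 : q (n+2) ≤ q (kk (n+1)) := hqmono (hkkge (n+1))
    have h3 : q (kk (n+1)) ≤ E (n+1) := Nat.le_add_right _ _
    omega
  set ψ : ℕ → ℝ := fun n => del (Nat.find (hEx n)) with hψ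
  have hψpos : ∀ n, 0 < ψ n := fun n => hdelpos _
  have hψmono : ∀ m n, m ≤ n → ψ n ≤ ψ m := by
    intro m n hmn
    apply hdelanti
    exact Nat.find_mono (fun j hj => lt_of_le_of_lt hmn hj)
  have hψge : ∀ n j, n < E j → del j ≤ ψ n := by
    intro n j hn
    exact hdelanti (Nat.find_le hn)
  have hψle : ∀ n j, E j ≤ n → ψ n ≤ del (j+1) := by
    intro n j hn
    apply hdelanti
    have : j < Nat.find (hEx n) := by
      rw [Nat.lt_find_iff]
      intro i hij
      push_neg
      exact le_trans (hEmono hij) hn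
    omega
  have hTdel : ∀ j, 1 ≤ (T j : ℝ) * del j := by
    intro j
    have h1 := hTlb j
    have h2 := hepspos (kk j)
    have h3 : (1/4 : ℝ)^(j+2) / eps (kk j) * del j = (1/4 : ℝ)^(j+2) * (4:ℝ)^(j+2) := by
      rw [hdel]
      field_simp
    have h4 : (1/4 : ℝ)^(j+2) * (4:ℝ)^(j+2) = 1 := by
      rw [← mul_pow]
      norm_num
    calc (1:ℝ) = (1/4 : ℝ)^(j+2) / eps (kk j) * del j := by rw [h3, h4]
      _ ≤ (T j : ℝ) * del j := by
          apply mul_le_mul_of_nonneg_right h1 (hdelpos j).le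
  -- divergence
  have hblock : ∀ j, (T j : ℝ) * del j ≤ ∑ n ∈ Finset.Ico (q (kk j)) (E j), ψ n := by
    intro j
    have hcard : (Finset.Ico (q (kk j)) (E j)).card = T j := by
      rw [Nat.card_Ico]
      simp only [hE]
      omega
    calc (T j:ℝ) * del j = ∑ _n ∈ Finset.Ico (q (kk j)) (E j), del j := by
          rw [Finset.sum_const, hcard, nsmul_eq_mul]
      _ ≤ ∑ n ∈ Finset.Ico (q (kk j)) (E j), ψ n :=
          Finset.sum_le_sum (fun n hn => hψge n j (Finset.mem_Ico.1 hn).2)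
  have hlowerpartial : ∀ j : ℕ, (j : ℝ) + 1 ≤ ∑ n ∈ Finset.range (E j), ψ n := by
    intro j
    induction j with
    | zero =>
      have h0 : ∑ n ∈ Finset.Ico (q (kk 0)) (E 0), ψ n ≤ ∑ n ∈ Finset.range (E 0), ψ n := by
        apply Finset.sum_le_sum_of_subset_of_nonneg
        · intro x hx
          rw [Finset.mem_range]
          exact (Finset.mem_Ico.1 hx).2
        · intro i _ _
          exact (hψpos i).le
      have h1 := hTdel 0
      have h2 := hblock 0
      norm_num
      linarith
    | succ j ih =>
      have hsplit : ∑ n ∈ Finset.range (E (j+1)), ψ n =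
          ∑ n ∈ Finset.range (E j), ψ n + ∑ n ∈ Finset.Ico (E j) (E (j+1)), ψ n := by
        simp only [Finset.range_eq_Ico]
        exact (Finset.sum_Ico_consecutive _ (Nat.zero_le (E j)) (hEmono (Nat.le_succ j))).symm
      have hsub : Finset.Ico (q (kk (j+1))) (E (j+1)) ⊆ Finset.Ico (E j) (E (j+1)) :=
        Finset.Ico_subset_Ico (hEq j) le_rfl
      have h2 : ∑ n ∈ Finset.Ico (q (kk (j+1))) (E (j+1)), ψ n ≤
          ∑ n ∈ Finset.Ico (E j) (E (j+1)), ψ n :=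
        Finset.sum_le_sum_of_subset_of_nonneg hsub (fun i _ _ => (hψpos i).le)
      have h3 := hblock (j+1)
      have h4 := hTdel (j+1)
      rw [hsplit]
      push_cast
      push_cast at ih
      linarith
  have hdiv : ¬ Summable ψ := by
    intro hs
    have hub : ∀ j, ∑ n ∈ Finset.range (E j), ψ n ≤ ∑' n, ψ n :=
      fun j => Summable.sum_le_tsum _ (fun i _ => (hψpos i).le) hs
    have h1 := hlowerpartial ⌈∑' n, ψ n⌉₊
    have h2 := hub ⌈∑' n, ψ n⌉₊
    have h3 := Nat.le_ceil (∑' n, ψ n)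
    linarith
  -- summability
  have hsummable : Summable fun k =>
      ∑ n ∈ Finset.Ico (q k) (q (k + 1)), min (ψ n) (eps k) := by
    set B : ℕ → ℝ := fun k => ∑ n ∈ Finset.Ico (q k) (q (k+1)), min (ψ n) (eps k) with hB
    have hBnn : ∀ k, 0 ≤ B k := by
      intro k
      apply Finset.sum_nonneg
      intro n _
      exact le_min (hψpos n).le (hepspos k).le
    have hchunk : ∀ j, ∑ k ∈ Finset.Ico (kk j) (kk (j+1)), B k ≤ (1/4:ℝ)^j := by
      intro j
      have hstep1 : ∀ k ∈ Finset.Ico (kk j) (kk (j+1)), B k ≤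
          ∑ n ∈ Finset.Ico (q k) (q (k+1)),
            (if n < E j then eps (kk j) else ψ n) := by
        intro k hk
        apply Finset.sum_le_sum
        intro n hn
        rw [Finset.mem_Ico] at hn hk
        by_cases hcase : n < E j
        · have hkj : k = kk j := by
            by_contra hne
            have hk1 : kk j + 1 ≤ k := by omega
            have hk2 : q (kk j + 1) ≤ q k := hqmono hk1
            have hk3 := hkey j
            omega
          rw [if_pos hcase, hkj]
          exact min_le_right _ _
        · rw [if_neg hcase]
          exact min_le_left _ _
      have hstep2 : ∑ k ∈ Finset.Ico (kk j) (kk (j+1)),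
            ∑ n ∈ Finset.Ico (q k) (q (k+1)), (if n < E j then eps (kk j) else ψ n)
          = ∑ n ∈ Finset.Ico (q (kk j)) (q (kk (j+1))),
              (if n < E j then eps (kk j) else ψ n) :=
        sum_blocks q hqmono _ (kk j) (kk (j+1)) (le_trans (Nat.le_succ _) (hkksucc j))
      have hsplit : ∑ n ∈ Finset.Ico (q (kk j)) (q (kk (j+1))),
            (if n < E j then eps (kk j) else ψ n)
          = ∑ n ∈ Finset.Ico (q (kk j)) (E j), (if n < E j then eps (kk j) else ψ n)
            + ∑ n ∈ Finset.Ico (E j) (q (kk (j+1))), (if n < E j then eps (kk j) else ψ n) :=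
        (Finset.sum_Ico_consecutive _ (Nat.le_add_right _ _) (hEq j)).symm
      have hfirst : ∑ n ∈ Finset.Ico (q (kk j)) (E j), (if n < E j then eps (kk j) else ψ n)
          ≤ (1/4:ℝ)^(j+2) + (1/16:ℝ)^(j+4) := by
        have hcard : (Finset.Ico (q (kk j)) (E j)).card = T j := by
          rw [Nat.card_Ico]
          simp only [hE]
          omega
        have heq : ∑ n ∈ Finset.Ico (q (kk j)) (E j), (if n < E j then eps (kk j) else ψ n)
            = ∑ _n ∈ Finset.Ico (q (kk j)) (E j), eps (kk j) := by
          apply Finset.sum_congr rfl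
          intro n hn
          rw [if_pos (Finset.mem_Ico.1 hn).2]
        rw [heq, Finset.sum_const, hcard, nsmul_eq_mul]
        have h1 : (T j : ℝ) * eps (kk j) ≤ ((1/4:ℝ)^(j+2) / eps (kk j) + 1) * eps (kk j) :=
          mul_le_mul_of_nonneg_right (hTub j) (hepspos (kk j)).le
        have h2 : ((1/4:ℝ)^(j+2) / eps (kk j) + 1) * eps (kk j)
            = (1/4:ℝ)^(j+2) + eps (kk j) := by
          rw [add_mul, div_mul_cancel₀ _ (hepspos (kk j)).ne', one_mul]
        have h3 : eps (kk j) ≤ (1/16:ℝ)^(j+4) := by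
          have h4 := hsmall j
          have h5 : (1:ℝ) ≤ (q (kk j) : ℝ) := by
            have := q_pos θ q hq (kk j)
            exact_mod_cast this
          nlinarith [hepspos (kk j)]
        linarith [h1, h2.le, h3]
      have hsecond : ∑ n ∈ Finset.Ico (E j) (q (kk (j+1))), (if n < E j then eps (kk j) else ψ n)
          ≤ (4:ℝ)^(j+1+2) * (1/16:ℝ)^(j+1+4) := by
        have hle : ∀ n ∈ Finset.Ico (E j) (q (kk (j+1))),
            (if n < E j then eps (kk j) else ψ n) ≤ del (j+1) := by
          intro n hn
          rw [Finset.mem_Ico] at hn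
          rw [if_neg (by omega)]
          exact hψle n j hn.1
        calc ∑ n ∈ Finset.Ico (E j) (q (kk (j+1))), (if n < E j then eps (kk j) else ψ n)
            ≤ ∑ _n ∈ Finset.Ico (E j) (q (kk (j+1))), del (j+1) := Finset.sum_le_sum hle
          _ = ((Finset.Ico (E j) (q (kk (j+1)))).card : ℝ) * del (j+1) := by
              rw [Finset.sum_const, nsmul_eq_mul]
          _ ≤ (q (kk (j+1)) : ℝ) * del (j+1) := by
              apply mul_le_mul_of_nonneg_right _ (hdelpos (j+1)).le
              rw [Nat.card_Ico]
              have h1 : (Finset.Ico (E j) (q (kk (j+1)))).card ≤ q (kk (j+1)) := by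
                rw [Nat.card_Ico]; omega
              exact_mod_cast Nat.sub_le _ _
          _ = (4:ℝ)^(j+1+2) * ((q (kk (j+1)) : ℝ) * eps (kk (j+1))) := by
              simp only [hdel]
              ring
          _ ≤ (4:ℝ)^(j+1+2) * (1/16:ℝ)^(j+1+4) := by
              apply mul_le_mul_of_nonneg_left (hsmall (j+1)).le (by positivity)
      have hcoef : (4:ℝ)^(j+1+2) * (1/16:ℝ)^(j+1+4) ≤ (1/4:ℝ)^j * (1/16) := by
        have hab : (4:ℝ)^j * (1/16:ℝ)^j = (1/4:ℝ)^j := by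
          rw [← mul_pow]; norm_num
        have e1 : (4:ℝ)^(j+1+2) = (4:ℝ)^j * 64 := by
          rw [show j+1+2 = j+3 from rfl, pow_add]; norm_num
        have e2 : (1/16:ℝ)^(j+1+4) = (1/16:ℝ)^j * (1/1048576) := by
          rw [show j+1+4 = j+5 from rfl, pow_add]; norm_num
        rw [e1, e2]
        have : (4:ℝ)^j * 64 * ((1/16:ℝ)^j * (1/1048576)) = ((1/4:ℝ)^j) * (64/1048576) := by
          rw [← hab]; ring
        rw [this]
        have hp := hpow116pos j
        nlinarith [pow_pos (show (0:ℝ) < 1/4 by norm_num) j]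
      have hc1 : (1/4:ℝ)^(j+2) = (1/4:ℝ)^j * (1/16) := by
        rw [pow_add]; norm_num
      have hc2 : (1/16:ℝ)^(j+4) ≤ (1/4:ℝ)^j * (1/16) := by
        have h1 : (1/16:ℝ)^j ≤ (1/4:ℝ)^j := by
          apply pow_le_pow_left₀ (by norm_num) (by norm_num)
        have h2 : (1/16:ℝ)^(j+4) = (1/16:ℝ)^j * (1/65536) := by
          rw [pow_add]; norm_num
        rw [h2]
        nlinarith [hpow116pos j, pow_pos (show (0:ℝ) < 1/4 by norm_num) j]
      calc ∑ k ∈ Finset.Ico (kk j) (kk (j+1)), B k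
          ≤ ∑ k ∈ Finset.Ico (kk j) (kk (j+1)),
              ∑ n ∈ Finset.Ico (q k) (q (k+1)), (if n < E j then eps (kk j) else ψ n) :=
            Finset.sum_le_sum hstep1
        _ = ∑ n ∈ Finset.Ico (q (kk j)) (q (kk (j+1))), (if n < E j then eps (kk j) else ψ n) :=
            hstep2
        _ ≤ (1/4:ℝ)^(j+2) + (1/16:ℝ)^(j+4) + (4:ℝ)^(j+1+2) * (1/16:ℝ)^(j+1+4) := by
            rw [hsplit]
            linarith [hfirst, hsecond]
        _ ≤ (1/4:ℝ)^j * (1/16) + (1/4:ℝ)^j * (1/16) + (1/4:ℝ)^j * (1/16) := by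
            linarith [hcoef, hc1.le, hc2]
        _ ≤ (1/4:ℝ)^j := by
            linarith [pow_nonneg (show (0:ℝ) ≤ 1/4 by norm_num) j]
    have hpart : ∀ K, ∑ k ∈ Finset.range K, B k
        ≤ (∑ k ∈ Finset.range (kk 0), B k) + 2 := by
      intro K
      have hKle : K ≤ kk K := by have := hkkge K; omega
      have h1 : ∑ k ∈ Finset.range K, B k ≤ ∑ k ∈ Finset.range (kk K), B k :=
        Finset.sum_le_sum_of_subset_of_nonneg (Finset.range_subset_range.2 hKle)
          (fun i _ _ => hBnn i)
      have h2 : ∑ k ∈ Finset.range (kk K), B k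
          = ∑ k ∈ Finset.range (kk 0), B k + ∑ k ∈ Finset.Ico (kk 0) (kk K), B k := by
        simp only [Finset.range_eq_Ico]
        exact (Finset.sum_Ico_consecutive _ (Nat.zero_le _) (hkkmono (Nat.zero_le K))).symm
      have h3 : ∑ k ∈ Finset.Ico (kk 0) (kk K), B k
          = ∑ j ∈ Finset.Ico 0 K, ∑ k ∈ Finset.Ico (kk j) (kk (j+1)), B k :=
        (sum_blocks kk hkkmono B 0 K (Nat.zero_le K)).symm
      have h4 : ∑ j ∈ Finset.Ico 0 K, ∑ k ∈ Finset.Ico (kk j) (kk (j+1)), B k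
          ≤ ∑ j ∈ Finset.Ico 0 K, (1/4:ℝ)^j :=
        Finset.sum_le_sum (fun j _ => hchunk j)
      have h5 : ∑ j ∈ Finset.Ico 0 K, (1/4:ℝ)^j ≤ 2 := by
        rw [← Finset.range_eq_Ico]
        rw [geom_sum_eq (by norm_num : (1/4:ℝ) ≠ 1)]
        have h6 : (0:ℝ) ≤ (1/4:ℝ)^K := by positivity
        have h7 : ((1/4:ℝ)^K - 1)/((1/4:ℝ) - 1) = (1 - (1/4:ℝ)^K) * (4/3) := by
          ring
        rw [h7]
        nlinarith
      linarith
    exact summable_of_sum_range_le hBnn hpart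
  exact ⟨ψ, hψpos, hψmono, hdiv, hsummable⟩
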